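/- Let A ∈ ℝ^{2n×2n} be symmetric positive definite and symplectic, partitioned into n×n blocks as A = [[A₁₁, A₁₂],[A₁₂ᵀ, A₂₂]]. Then the Schur complement S := A₂₂ − A₁₂ᵀ A₁₁⁻¹ A₁₂ of A₁₁ in A satisfies S = A₁₁⁻¹. -/

import Mathlib

open Matrix

/-- Spectral norm (ℓ² operator norm) of a real square matrix. -/
noncomputable def specNorm {m : Type*} [Fintype m] [DecidableEq m] (M : Matrix m m ℝ) : ℝ :=
  ‖LinearMap.toContinuousLinearMap (Matrix.toEuclideanLin M)‖

/-- Frobenius norm of a real square matrix. -/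
noncomputable def frobNorm {m : Type*} [Fintype m] (M : Matrix m m ℝ) : ℝ :=
  Real.sqrt (∑ i, ∑ j, (M i j) ^ 2)

/-- Spectral condition number κ₂(M) = ‖M⁻¹‖₂ ‖M‖₂. -/
noncomputable def cond2 {m : Type*} [Fintype m] [DecidableEq m] (M : Matrix m m ℝ) : ℝ :=
  specNorm M⁻¹ * specNorm M

/-- Spectral radius of a real square matrix (via its complex spectrum). -/
noncomputable def specRad {m : Type*} [Fintype m] [DecidableEq m] (M : Matrix m m ℝ) : ℝ :=
  (spectralRadius ℂ (M.map (Complex.ofReal ·))).toReal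

/-- Lower triangular predicate. -/
def LowerTri {k : ℕ} (M : Matrix (Fin k) (Fin k) ℝ) : Prop := ∀ i j, i < j → M i j = 0
/-- Upper triangular predicate. -/
def UpperTri {k : ℕ} (M : Matrix (Fin k) (Fin k) ℝ) : Prop := ∀ i j, j < i → M i j = 0
/-- Positive diagonal entries predicate. -/
def PosDiag {k : ℕ} (M : Matrix (Fin k) (Fin k) ℝ) : Prop := ∀ i, 0 < M i i

/-- The standard symplectic matrix J = [[0, I], [-I, 0]]. -/
noncomputable def Jmat (n : ℕ) : Matrix (Fin n ⊕ Fin n) (Fin n ⊕ Fin n) ℝ :=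
  fromBlocks 0 1 (-1) 0

/-- M is symplectic iff MᵀJM = J. -/
def IsSymplectic {n : ℕ} (M : Matrix (Fin n ⊕ Fin n) (Fin n ⊕ Fin n) ℝ) : Prop :=
  Mᵀ * Jmat n * M = Jmat n

/-- Ω(M) = MᵀJM − J, the loss of symplecticity. -/
noncomputable def Omega {n : ℕ} (M : Matrix (Fin n ⊕ Fin n) (Fin n ⊕ Fin n) ℝ) :
    Matrix (Fin n ⊕ Fin n) (Fin n ⊕ Fin n) ℝ :=
  Mᵀ * Jmat n * M - Jmat n

/-- For A symmetric positive definite and symplectic, the Schur complement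
S = A₂₂ − A₁₂ᵀA₁₁⁻¹A₁₂ of A₁₁ in A equals A₁₁⁻¹. -/
theorem stmt2 {n : ℕ} (hn : 1 ≤ n)
    (A11 A12 A22 : Matrix (Fin n) (Fin n) ℝ)
    (A : Matrix (Fin n ⊕ Fin n) (Fin n ⊕ Fin n) ℝ)
    (hA : A = fromBlocks A11 A12 A12ᵀ A22)
    (hpd : A.PosDef) (hsymp : IsSymplectic A) :
    A22 - A12ᵀ * A11⁻¹ * A12 = A11⁻¹ := by
  have hAT : Aᵀ = A := by
    have h := hpd.1
    unfold Matrix.IsHermitian at h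
    simpa using h
  -- A11 is positive definite
  have hA11 : A11.PosDef := by
    refine Matrix.PosDef.of_dotProduct_mulVec_pos ?_ ?_
    · have h := hpd.1
      ext i j
      have := congrFun (congrFun h (Sum.inl i)) (Sum.inl j)
      simpa [hA, fromBlocks, conjTranspose, transpose] using this
    · intro x hx
      have hy : (Sum.elim x 0 : Fin n ⊕ Fin n → ℝ) ≠ 0 := by
        intro h
        apply hx
        funext i
        exact congrFun h (Sum.inl i)
      have := hpd.dotProduct_mulVec_pos hy
      simpa [hA, dotProduct, mulVec, Fintype.sum_sum_type, fromBlocks] using this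
  have hdet : IsUnit A11.det := isUnit_iff_ne_zero.mpr hA11.det_pos.ne'
  have hinv : A11⁻¹ * A11 = 1 := nonsing_inv_mul _ hdet
  have hinv' : A11 * A11⁻¹ = 1 := mul_nonsing_inv _ hdet
  -- block equations from symplecticity
  unfold IsSymplectic at hsymp
  rw [hAT, hA, Jmat] at hsymp
  rw [fromBlocks_multiply, fromBlocks_multiply] at hsymp
  have e1' : A11 * A12ᵀ = A12 * A11 := by
    ext i j
    have h := congrFun (congrFun hsymp (Sum.inl i)) (Sum.inl j)
    simp [fromBlocks, Matrix.add_apply, Matrix.neg_apply] at h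
    linarith
  have e2 : A11 * A22 = 1 + A12 * A12 := by
    ext i j
    have h := congrFun (congrFun hsymp (Sum.inl i)) (Sum.inr j)
    simp [fromBlocks, Matrix.add_apply, Matrix.neg_apply] at h
    rw [Matrix.add_apply]
    linarith
  -- A12ᵀ * A11⁻¹ = A11⁻¹ * A12
  have ecomm : A12ᵀ * A11⁻¹ = A11⁻¹ * A12 := by
    calc A12ᵀ * A11⁻¹ = A11⁻¹ * (A11 * A12ᵀ) * A11⁻¹ := by
          rw [← mul_assoc, hinv, one_mul]
      _ = A11⁻¹ * (A12 * A11) * A11⁻¹ := by rw [e1']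
      _ = A11⁻¹ * A12 := by rw [mul_assoc, mul_assoc, hinv', mul_one]
  have e22 : A22 = A11⁻¹ + A11⁻¹ * (A12 * A12) := by
    have : A11⁻¹ * (A11 * A22) = A11⁻¹ * (1 + A12 * A12) := by rw [e2]
    rw [← mul_assoc, hinv, one_mul, mul_add, mul_one] at this
    exact this
  rw [e22, ecomm]
  noncomm_ring
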